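/- Fix ε₀ > 0 sufficiently small, set α := 1 + ε₀ and ε₁ := ε₀²/18, and define λ_q := ⌊λ₀^{α^q}⌋, δ_q := λ_q^{−2/5+2ε₀}, μ_q := δ_{q−1}^{1/4} δ_q^{1/4} λ_{q−1}^{1/2} λ_q^{1/2} for q ≥ 1, with λ₀ sufficiently large. For q ≥ 1 define U^{(q)} := ⋃_{l ∈ ℤ, |l| ≤ μ_q} [ (l + 1/2)/μ_q − λ_q^{−ε₁}/μ_q , (l + 1/2)/μ_q + λ_q^{−ε₁}/μ_q ] and V^{(q)} := ⋃_{q' ≥ q} U^{(q')}. Then for every d ∈ (0,1) with d > (1+α)(4/5+ε₀)/((1+α)(4/5+ε₀)+2αε₁), the set Ω := ⋂_{q=1}^∞ V^{(q)} has Hausdorff dimension at most d; in particular, dimH Ω < 1 and Ω has Lebesgue measure zero. -/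

import Mathlib

open scoped BigOperators
open MeasureTheory Topology
open scoped ENNReal NNReal

set_option maxHeartbeats 1000000

noncomputable section

/-- `λ_q := ⌊λ₀^{(1+ε₀)^q}⌋`. -/
def lamP (l₀ ε₀ : ℝ) (q : ℕ) : ℝ := ((⌊l₀ ^ ((1 + ε₀) ^ q)⌋ : ℤ) : ℝ)

/-- `δ_q := λ_q^{−2/5+2ε₀}`. -/
def delP (l₀ ε₀ : ℝ) (q : ℕ) : ℝ := lamP l₀ ε₀ q ^ (-(2 : ℝ)/5 + 2 * ε₀)

/-- `μ_q := δ_{q−1}^{1/4} δ_q^{1/4} λ_{q−1}^{1/2} λ_q^{1/2}` (for `q ≥ 1`). -/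
def muP (l₀ ε₀ : ℝ) (q : ℕ) : ℝ :=
  delP l₀ ε₀ (q - 1) ^ ((1 : ℝ)/4) * delP l₀ ε₀ q ^ ((1 : ℝ)/4)
    * lamP l₀ ε₀ (q - 1) ^ ((1 : ℝ)/2) * lamP l₀ ε₀ q ^ ((1 : ℝ)/2)

/-- `U^{(q)}`: the union over `l ∈ ℤ`, `|l| ≤ μ_q`, of the closed intervals of radius
`λ_q^{−ε₁}/μ_q` centred at `(l + 1/2)/μ_q`. -/
def Uq (l₀ ε₀ : ℝ) (q : ℕ) : Set ℝ :=
  ⋃ (l : ℤ) (_ : |(l : ℝ)| ≤ muP l₀ ε₀ q),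
    Set.Icc (((l : ℝ) + 1/2) / muP l₀ ε₀ q
        - lamP l₀ ε₀ q ^ (-(ε₀ ^ 2 / 18)) / muP l₀ ε₀ q)
      (((l : ℝ) + 1/2) / muP l₀ ε₀ q
        + lamP l₀ ε₀ q ^ (-(ε₀ ^ 2 / 18)) / muP l₀ ε₀ q)

/-- `V^{(q)} := ⋃_{q' ≥ q} U^{(q')}`. -/
def Vq (l₀ ε₀ : ℝ) (q : ℕ) : Set ℝ := ⋃ (q' : ℕ) (_ : q ≤ q'), Uq l₀ ε₀ q'

lemma key (ε₀ l₀ d : ℝ) (hε₀ : 0 < ε₀) (hε₀1 : ε₀ < 1) (hl₀ : 2 ≤ l₀)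
    (hd0 : 0 < d) (hd1 : d < 1)
    (hdT : ((1 + (1 + ε₀)) * (4/5 + ε₀))
          / ((1 + (1 + ε₀)) * (4/5 + ε₀) + 2 * (1 + ε₀) * (ε₀ ^ 2 / 18)) < d) :
    μH[d] (⋂ (q : ℕ) (_ : 1 ≤ q), Vq l₀ ε₀ q) = 0 := by
  have hl₀1 : (1:ℝ) < l₀ := by linarith
  have hl₀0 : (0:ℝ) < l₀ := by linarith
  -- the positive decay exponent
  obtain ⟨c, hc_def⟩ : ∃ c : ℝ, c = d * (ε₀^2/18) * (1+ε₀) - (1-d) * ((1+(1+ε₀)) * (2/5+ε₀/2)) :=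
    ⟨_, rfl⟩
  have hc : 0 < c := by
    have hD : 0 < (1 + (1 + ε₀)) * (4/5 + ε₀) + 2 * (1 + ε₀) * (ε₀ ^ 2 / 18) := by positivity
    have h1 := (div_lt_iff₀ hD).mp hdT
    have h2 : (1-d) * ((1+(1+ε₀)) * (4/5+ε₀)) < d * (2*(1+ε₀)*(ε₀^2/18)) := by nlinarith
    have h3 : (1+(1+ε₀)) * (2/5+ε₀/2) = ((1+(1+ε₀)) * (4/5+ε₀))/2 := by ring
    have h4 : d * (ε₀^2/18) * (1+ε₀) = (d * (2*(1+ε₀)*(ε₀^2/18)))/2 := by ring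
    rw [hc_def, h3, h4]
    linarith
  -- powers of α
  have hP : ∀ q : ℕ, 1 + (q:ℝ) * ε₀ ≤ (1+ε₀)^q := by
    intro q
    simpa [mul_comm] using one_add_mul_le_pow (by linarith : (-2:ℝ) ≤ ε₀) q
  have hApos : ∀ q : ℕ, (1:ℝ) ≤ (1+ε₀)^q := fun q => one_le_pow₀ (by linarith)
  -- bounds on lamP
  have hL2 : ∀ q : ℕ, 2 ≤ l₀ ^ ((1+ε₀)^q : ℝ) := by
    intro q
    calc (2:ℝ) ≤ l₀ := hl₀
    _ = l₀ ^ (1:ℝ) := (Real.rpow_one l₀).symm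
    _ ≤ l₀ ^ ((1+ε₀)^q : ℝ) := Real.rpow_le_rpow_of_exponent_le hl₀1.le (hApos q)
  have hlam_le : ∀ q : ℕ, lamP l₀ ε₀ q ≤ l₀ ^ ((1+ε₀)^q : ℝ) := fun q => Int.floor_le _
  have hlam_ge : ∀ q : ℕ, l₀ ^ ((1+ε₀)^q : ℝ) / 2 ≤ lamP l₀ ε₀ q := by
    intro q
    have h1 := (Int.sub_one_lt_floor (l₀ ^ ((1+ε₀)^q : ℝ))).le
    have := hL2 q
    unfold lamP
    linarith
  have hlam1 : ∀ q : ℕ, 1 ≤ lamP l₀ ε₀ q := by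
    intro q
    have := hlam_ge q; have := hL2 q; linarith
  have hlam0 : ∀ q : ℕ, 0 < lamP l₀ ε₀ q := fun q => lt_of_lt_of_le one_pos (hlam1 q)
  -- mu as a product of rpow's
  have hmu_eq : ∀ q : ℕ, muP l₀ ε₀ q
      = lamP l₀ ε₀ (q-1) ^ (2/5 + ε₀/2 : ℝ) * lamP l₀ ε₀ q ^ (2/5 + ε₀/2 : ℝ) := by
    intro q
    have h : ∀ x : ℝ, 0 < x →
        (x ^ ((-(2:ℝ))/5 + 2*ε₀)) ^ ((1:ℝ)/4) * x ^ ((1:ℝ)/2) = x ^ (2/5 + ε₀/2 : ℝ) := by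
      intro x hx
      rw [← Real.rpow_mul hx.le, ← Real.rpow_add hx]
      congr 1
      ring
    unfold muP delP
    rw [← h _ (hlam0 (q-1)), ← h _ (hlam0 q)]
    ring
  have he0 : (0:ℝ) ≤ 2/5 + ε₀/2 := by linarith
  have hmu1 : ∀ q : ℕ, 1 ≤ muP l₀ ε₀ q := by
    intro q
    rw [hmu_eq q]
    have h1 := Real.one_le_rpow (hlam1 (q-1)) he0
    have h2 := Real.one_le_rpow (hlam1 q) he0
    nlinarith
  have hmu0 : ∀ q : ℕ, 0 < muP l₀ ε₀ q := fun q => lt_of_lt_of_le one_pos (hmu1 q)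
  have hmu_le : ∀ q : ℕ, 1 ≤ q → muP l₀ ε₀ q
      ≤ l₀ ^ ((1+(1+ε₀)) * (2/5+ε₀/2) * (1+ε₀)^(q-1) : ℝ) := by
    intro q hq
    rw [hmu_eq q]
    have hq' : q - 1 + 1 = q := Nat.succ_pred_eq_of_pos hq
    have hpow : ((1+ε₀):ℝ)^q = (1+ε₀)^(q-1) * (1+ε₀) := by
      conv_lhs => rw [← hq']
      rw [pow_succ]
    have h1 : lamP l₀ ε₀ (q-1) ^ (2/5+ε₀/2 : ℝ)
        ≤ (l₀ ^ ((1+ε₀)^(q-1) : ℝ)) ^ (2/5+ε₀/2 : ℝ) :=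
      Real.rpow_le_rpow (hlam0 _).le (hlam_le _) he0
    have h2 : lamP l₀ ε₀ q ^ (2/5+ε₀/2 : ℝ)
        ≤ (l₀ ^ ((1+ε₀)^q : ℝ)) ^ (2/5+ε₀/2 : ℝ) :=
      Real.rpow_le_rpow (hlam0 _).le (hlam_le _) he0
    calc lamP l₀ ε₀ (q-1) ^ (2/5+ε₀/2 : ℝ) * lamP l₀ ε₀ q ^ (2/5+ε₀/2 : ℝ)
        ≤ (l₀ ^ ((1+ε₀)^(q-1) : ℝ)) ^ (2/5+ε₀/2 : ℝ)
          * (l₀ ^ ((1+ε₀)^q : ℝ)) ^ (2/5+ε₀/2 : ℝ) :=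
          mul_le_mul h1 h2 (Real.rpow_nonneg (hlam0 _).le _) (by positivity)
      _ = l₀ ^ ((1+(1+ε₀)) * (2/5+ε₀/2) * (1+ε₀)^(q-1) : ℝ) := by
          rw [← Real.rpow_mul hl₀0.le, ← Real.rpow_mul hl₀0.le, ← Real.rpow_add hl₀0]
          congr 1
          rw [hpow]; ring
  have h2rpow : (2:ℝ) ^ ((2:ℝ)/5) ≤ 2 := by
    calc (2:ℝ) ^ ((2:ℝ)/5) ≤ 2 ^ (1:ℝ) :=
          Real.rpow_le_rpow_of_exponent_le (by norm_num) (by norm_num)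
      _ = 2 := Real.rpow_one 2
  have hmu_ge : ∀ q : ℕ, l₀ ^ ((2:ℝ)/5 * (1+ε₀)^(q-1) : ℝ) / 2 ≤ muP l₀ ε₀ q := by
    intro q
    rw [hmu_eq q]
    have h2 : (1:ℝ) ≤ lamP l₀ ε₀ q ^ (2/5+ε₀/2 : ℝ) := Real.one_le_rpow (hlam1 q) he0
    have ha : lamP l₀ ε₀ (q-1) ^ ((2:ℝ)/5) ≤ lamP l₀ ε₀ (q-1) ^ (2/5+ε₀/2 : ℝ) :=
      Real.rpow_le_rpow_of_exponent_le (hlam1 _) (by linarith)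
    have hb : (l₀ ^ ((1+ε₀)^(q-1) : ℝ) / 2) ^ ((2:ℝ)/5) ≤ lamP l₀ ε₀ (q-1) ^ ((2:ℝ)/5) :=
      Real.rpow_le_rpow (by positivity) (hlam_ge _) (by norm_num)
    have hcc : l₀ ^ ((2:ℝ)/5 * (1+ε₀)^(q-1) : ℝ) / 2
        ≤ (l₀ ^ ((1+ε₀)^(q-1) : ℝ) / 2) ^ ((2:ℝ)/5) := by
      rw [Real.div_rpow (by positivity) (by norm_num), ← Real.rpow_mul hl₀0.le,
        mul_comm ((1+ε₀)^(q-1) : ℝ)]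
      have hpos : (0:ℝ) < l₀ ^ ((2:ℝ)/5 * (1+ε₀)^(q-1) : ℝ) := Real.rpow_pos_of_pos hl₀0 _
      have h25 : (0:ℝ) < (2:ℝ) ^ ((2:ℝ)/5) := by positivity
      exact div_le_div_of_nonneg_left hpos.le h25 h2rpow
    have hnn : (0:ℝ) ≤ lamP l₀ ε₀ (q-1) ^ (2/5+ε₀/2 : ℝ) := Real.rpow_nonneg (hlam0 _).le _
    calc l₀ ^ ((2:ℝ)/5 * (1+ε₀)^(q-1) : ℝ) / 2
        ≤ lamP l₀ ε₀ (q-1) ^ (2/5+ε₀/2 : ℝ) := le_trans hcc (le_trans hb ha)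
      _ ≤ lamP l₀ ε₀ (q-1) ^ (2/5+ε₀/2 : ℝ) * lamP l₀ ε₀ q ^ (2/5+ε₀/2 : ℝ) :=
          le_mul_of_one_le_right hnn h2
  -- interval length
  set len : ℕ → ℝ := fun q => 2 * (lamP l₀ ε₀ q ^ (-(ε₀ ^ 2 / 18)) / muP l₀ ε₀ q)
    with hlen_def
  have hlen_pos : ∀ q : ℕ, 0 < len q := by
    intro q
    have h1 : (0:ℝ) < lamP l₀ ε₀ q ^ (-(ε₀ ^ 2 / 18)) := Real.rpow_pos_of_pos (hlam0 q) _
    have h2 := hmu0 q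
    simp only [hlen_def]
    positivity
  have hlen_le : ∀ q : ℕ, len q ≤ 4 * l₀ ^ (-((2:ℝ)/5 * (1+ε₀)^(q-1)) : ℝ) := by
    intro q
    have h1 : lamP l₀ ε₀ q ^ (-(ε₀ ^ 2 / 18)) ≤ 1 :=
      Real.rpow_le_one_of_one_le_of_nonpos (hlam1 q) (neg_nonpos.mpr (by positivity))
    have hX : (0:ℝ) < l₀ ^ ((2:ℝ)/5 * (1+ε₀)^(q-1) : ℝ) := Real.rpow_pos_of_pos hl₀0 _
    have h2 : len q ≤ 2 / muP l₀ ε₀ q := by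
      simp only [hlen_def]
      rw [mul_div_assoc']
      exact div_le_div₀ (by norm_num) (by nlinarith) (hmu0 q) le_rfl
    have h3 : 2 / muP l₀ ε₀ q ≤ 2 / (l₀ ^ ((2:ℝ)/5 * (1+ε₀)^(q-1) : ℝ) / 2) :=
      div_le_div_of_nonneg_left (by norm_num) (by positivity) (hmu_ge q)
    have h4 : 2 / (l₀ ^ ((2:ℝ)/5 * (1+ε₀)^(q-1) : ℝ) / 2)
        = 4 * l₀ ^ (-((2:ℝ)/5 * (1+ε₀)^(q-1)) : ℝ) := by
      rw [Real.rpow_neg hl₀0.le]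
      field_simp
      ring_nf
    linarith
  -- main term estimate
  have hterm : ∀ q : ℕ, 1 ≤ q →
      3 * muP l₀ ε₀ q * len q ^ d ≤ 12 * l₀ ^ (-(c * (1+ε₀)^(q-1)) : ℝ) := by
    intro q hq
    have hq' : q - 1 + 1 = q := Nat.succ_pred_eq_of_pos hq
    have hpow : ((1+ε₀):ℝ)^q = (1+ε₀)^(q-1) * (1+ε₀) := by
      conv_lhs => rw [← hq']
      rw [pow_succ]
    have hmud : muP l₀ ε₀ q ^ d ≠ 0 := (Real.rpow_pos_of_pos (hmu0 q) d).ne'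
    have hlampos : (0:ℝ) < lamP l₀ ε₀ q ^ (-(ε₀ ^ 2 / 18)) := Real.rpow_pos_of_pos (hlam0 q) _
    have hlen_pow : len q ^ d
        = 2 ^ d * lamP l₀ ε₀ q ^ (-(ε₀ ^ 2 / 18) * d) / muP l₀ ε₀ q ^ d := by
      simp only [hlen_def]
      rw [mul_div_assoc', Real.div_rpow (by positivity) (hmu0 q).le,
        Real.mul_rpow (by norm_num) hlampos.le, ← Real.rpow_mul (hlam0 q).le]
    have hsplit : 3 * muP l₀ ε₀ q * len q ^ d
        = 3 * (2:ℝ) ^ d * lamP l₀ ε₀ q ^ (-(ε₀ ^ 2 / 18) * d) * muP l₀ ε₀ q ^ ((1:ℝ) - d) := by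
      rw [hlen_pow, Real.rpow_sub (hmu0 q), Real.rpow_one]
      field_simp
    -- factor bounds
    have f1 : (2:ℝ) ^ d ≤ 2 := by
      calc (2:ℝ) ^ d ≤ 2 ^ (1:ℝ) := Real.rpow_le_rpow_of_exponent_le (by norm_num) hd1.le
        _ = 2 := Real.rpow_one 2
    have hε₁d : 0 < ε₀ ^ 2 / 18 * d := by positivity
    have hε₁d1 : ε₀ ^ 2 / 18 * d ≤ 1 := by nlinarith
    have f2 : lamP l₀ ε₀ q ^ (-(ε₀ ^ 2 / 18) * d)
        ≤ 2 * l₀ ^ (-(ε₀ ^ 2 / 18 * d * (1+ε₀) * (1+ε₀)^(q-1)) : ℝ) := by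
      have hhalf : (0:ℝ) < l₀ ^ ((1+ε₀)^q : ℝ) / 2 := by positivity
      have h1 : lamP l₀ ε₀ q ^ (-(ε₀ ^ 2 / 18) * d)
          ≤ (l₀ ^ ((1+ε₀)^q : ℝ) / 2) ^ (-(ε₀ ^ 2 / 18) * d) :=
        Real.rpow_le_rpow_of_nonpos hhalf (hlam_ge q) (by nlinarith)
      have h2 : (l₀ ^ ((1+ε₀)^q : ℝ) / 2) ^ (-(ε₀ ^ 2 / 18) * d)
          = (l₀ ^ ((1+ε₀)^q : ℝ)) ^ (-(ε₀ ^ 2 / 18) * d) * 2 ^ (ε₀ ^ 2 / 18 * d) := by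
        rw [Real.div_rpow (by positivity) (by norm_num)]
        rw [show -(ε₀ ^ 2 / 18) * d = -(ε₀ ^ 2 / 18 * d) by ring, Real.rpow_neg (by norm_num : (0:ℝ) ≤ 2)]
        field_simp
      have h3 : (2:ℝ) ^ (ε₀ ^ 2 / 18 * d) ≤ 2 := by
        calc (2:ℝ) ^ (ε₀ ^ 2 / 18 * d) ≤ 2 ^ (1:ℝ) :=
            Real.rpow_le_rpow_of_exponent_le (by norm_num) hε₁d1
          _ = 2 := Real.rpow_one 2
      have h4 : (l₀ ^ ((1+ε₀)^q : ℝ)) ^ (-(ε₀ ^ 2 / 18) * d)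
          = l₀ ^ (-(ε₀ ^ 2 / 18 * d * (1+ε₀) * (1+ε₀)^(q-1)) : ℝ) := by
        rw [← Real.rpow_mul hl₀0.le]
        congr 1
        rw [hpow]; ring
      have h5 : (0:ℝ) ≤ (l₀ ^ ((1+ε₀)^q : ℝ)) ^ (-(ε₀ ^ 2 / 18) * d) :=
        Real.rpow_nonneg (by positivity) _
      calc lamP l₀ ε₀ q ^ (-(ε₀ ^ 2 / 18) * d)
          ≤ (l₀ ^ ((1+ε₀)^q : ℝ) / 2) ^ (-(ε₀ ^ 2 / 18) * d) := h1
        _ = (l₀ ^ ((1+ε₀)^q : ℝ)) ^ (-(ε₀ ^ 2 / 18) * d) * 2 ^ (ε₀ ^ 2 / 18 * d) := h2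
        _ ≤ (l₀ ^ ((1+ε₀)^q : ℝ)) ^ (-(ε₀ ^ 2 / 18) * d) * 2 :=
            mul_le_mul_of_nonneg_left h3 h5
        _ = 2 * l₀ ^ (-(ε₀ ^ 2 / 18 * d * (1+ε₀) * (1+ε₀)^(q-1)) : ℝ) := by
            rw [h4]; ring
    have f3 : muP l₀ ε₀ q ^ ((1:ℝ) - d)
        ≤ l₀ ^ ((1+(1+ε₀)) * (2/5+ε₀/2) * (1-d) * (1+ε₀)^(q-1) : ℝ) := by
      calc muP l₀ ε₀ q ^ ((1:ℝ) - d)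
          ≤ (l₀ ^ ((1+(1+ε₀)) * (2/5+ε₀/2) * (1+ε₀)^(q-1) : ℝ)) ^ ((1:ℝ) - d) :=
            Real.rpow_le_rpow (hmu0 q).le (hmu_le q hq) (by linarith)
        _ = l₀ ^ ((1+(1+ε₀)) * (2/5+ε₀/2) * (1-d) * (1+ε₀)^(q-1) : ℝ) := by
            rw [← Real.rpow_mul hl₀0.le]
            congr 1; ring
    have hf2nn : (0:ℝ) ≤ lamP l₀ ε₀ q ^ (-(ε₀ ^ 2 / 18) * d) := (Real.rpow_pos_of_pos (hlam0 q) _).le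
    have hf3nn : (0:ℝ) ≤ muP l₀ ε₀ q ^ ((1:ℝ) - d) := (Real.rpow_pos_of_pos (hmu0 q) _).le
    calc 3 * muP l₀ ε₀ q * len q ^ d
        = 3 * (2:ℝ) ^ d * lamP l₀ ε₀ q ^ (-(ε₀ ^ 2 / 18) * d) * muP l₀ ε₀ q ^ ((1:ℝ) - d) :=
          hsplit
      _ ≤ 3 * 2 * (2 * l₀ ^ (-(ε₀ ^ 2 / 18 * d * (1+ε₀) * (1+ε₀)^(q-1)) : ℝ))
            * (l₀ ^ ((1+(1+ε₀)) * (2/5+ε₀/2) * (1-d) * (1+ε₀)^(q-1) : ℝ)) := by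
          apply mul_le_mul _ f3 hf3nn (by positivity)
          apply mul_le_mul _ f2 hf2nn (by positivity)
          exact mul_le_mul_of_nonneg_left f1 (by norm_num)
      _ = 12 * (l₀ ^ (-(ε₀ ^ 2 / 18 * d * (1+ε₀) * (1+ε₀)^(q-1)) : ℝ)
            * l₀ ^ ((1+(1+ε₀)) * (2/5+ε₀/2) * (1-d) * (1+ε₀)^(q-1) : ℝ)) := by ring
      _ = 12 * l₀ ^ (-(c * (1+ε₀)^(q-1)) : ℝ) := by
          rw [← Real.rpow_add hl₀0]
          congr 1
          rw [hc_def]; ring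
  -- geometric decay
  obtain ⟨ρ, hρ_def⟩ : ∃ ρ : ℝ, ρ = l₀ ^ (-(c * ε₀ / 2) : ℝ) := ⟨_, rfl⟩
  have hcε : 0 < c * ε₀ := mul_pos hc hε₀
  have hρ0 : 0 < ρ := hρ_def ▸ Real.rpow_pos_of_pos hl₀0 _
  have hρ1 : ρ < 1 := hρ_def ▸ Real.rpow_lt_one_of_one_lt_of_neg hl₀1 (by linarith)
  obtain ⟨σ, hσ_def⟩ : ∃ σ : ℝ, σ = l₀ ^ (-((2:ℝ)/5 * ε₀) : ℝ) := ⟨_, rfl⟩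
  have hσ0 : 0 < σ := hσ_def ▸ Real.rpow_pos_of_pos hl₀0 _
  have hσ1 : σ < 1 := hσ_def ▸ Real.rpow_lt_one_of_one_lt_of_neg hl₀1 (by linarith)
  have hgeo : ∀ q : ℕ, l₀ ^ (-(c * (1+ε₀)^(q-1)) : ℝ)
      ≤ l₀ ^ (-c : ℝ) * ρ ^ (q-1) * ρ ^ (q-1) := by
    intro q
    have hA := hP (q-1)
    have h1 : l₀ ^ (-(c * (1+ε₀)^(q-1)) : ℝ)
        ≤ l₀ ^ ((-c) + (-(c * ε₀ / 2)) * ((q-1 : ℕ) : ℝ) + (-(c * ε₀ / 2)) * ((q-1 : ℕ) : ℝ)) := by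
      apply Real.rpow_le_rpow_of_exponent_le hl₀1.le
      have hmul := mul_le_mul_of_nonneg_left (hP (q-1)) hc.le
      nlinarith [hmul]
    calc l₀ ^ (-(c * (1+ε₀)^(q-1)) : ℝ)
        ≤ l₀ ^ ((-c) + (-(c * ε₀ / 2)) * ((q-1 : ℕ) : ℝ) + (-(c * ε₀ / 2)) * ((q-1 : ℕ) : ℝ)) := h1
      _ = l₀ ^ (-c : ℝ) * ρ ^ (q-1) * ρ ^ (q-1) := by
          rw [hρ_def, Real.rpow_add hl₀0, Real.rpow_add hl₀0, Real.rpow_mul hl₀0.le,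
            Real.rpow_natCast]
  have hlen2 : ∀ q : ℕ, len q ≤ 4 * σ ^ (q-1) := by
    intro q
    have h1 : l₀ ^ (-((2:ℝ)/5 * (1+ε₀)^(q-1)) : ℝ) ≤ σ ^ (q-1) := by
      have h2 : l₀ ^ (-((2:ℝ)/5 * (1+ε₀)^(q-1)) : ℝ)
          ≤ l₀ ^ ((-((2:ℝ)/5 * ε₀)) * ((q-1 : ℕ) : ℝ)) := by
        apply Real.rpow_le_rpow_of_exponent_le hl₀1.le
        nlinarith [hP (q-1)]
      calc l₀ ^ (-((2:ℝ)/5 * (1+ε₀)^(q-1)) : ℝ)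
          ≤ l₀ ^ ((-((2:ℝ)/5 * ε₀)) * ((q-1 : ℕ) : ℝ)) := h2
        _ = σ ^ (q-1) := by rw [hσ_def, Real.rpow_mul hl₀0.le, Real.rpow_natCast]
    have := hlen_le q
    nlinarith
  have hterm2 : ∀ q : ℕ, 1 ≤ q →
      3 * muP l₀ ε₀ q * len q ^ d ≤ 12 * l₀ ^ (-c : ℝ) * ρ ^ (q-1) * ρ ^ (q-1) := by
    intro q hq
    calc 3 * muP l₀ ε₀ q * len q ^ d ≤ 12 * l₀ ^ (-(c * (1+ε₀)^(q-1)) : ℝ) := hterm q hq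
      _ ≤ 12 * (l₀ ^ (-c : ℝ) * ρ ^ (q-1) * ρ ^ (q-1)) := by
          nlinarith [hgeo q, Real.rpow_pos_of_pos hl₀0 (-(c * (1+ε₀)^(q-1)) : ℝ)]
      _ = 12 * l₀ ^ (-c : ℝ) * ρ ^ (q-1) * ρ ^ (q-1) := by ring
  -- the covering sets
  classical
  set t : ℕ → ℕ × ℤ → Set ℝ := fun Q p =>
    if Q + 1 ≤ p.1 ∧ |(p.2 : ℝ)| ≤ muP l₀ ε₀ p.1 then
      Set.Icc (((p.2 : ℝ) + 1/2) / muP l₀ ε₀ p.1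
          - lamP l₀ ε₀ p.1 ^ (-(ε₀ ^ 2 / 18)) / muP l₀ ε₀ p.1)
        (((p.2 : ℝ) + 1/2) / muP l₀ ε₀ p.1
          + lamP l₀ ε₀ p.1 ^ (-(ε₀ ^ 2 / 18)) / muP l₀ ε₀ p.1)
    else ∅ with ht_def
  have hr : Filter.Tendsto (fun Q : ℕ => ENNReal.ofReal (4 * σ ^ Q)) Filter.atTop (𝓝 0) := by
    have h1 : Filter.Tendsto (fun Q : ℕ => 4 * σ ^ Q) Filter.atTop (𝓝 (0:ℝ)) := by
      have h2 := tendsto_pow_atTop_nhds_zero_of_lt_one hσ0.le hσ1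
      simpa using h2.const_mul (4:ℝ)
    simpa using ENNReal.tendsto_ofReal h1
  have hdiam : ∀ (Q : ℕ) (p : ℕ × ℤ), Metric.ediam (t Q p) ≤ ENNReal.ofReal (4 * σ ^ Q) := by
    intro Q p
    simp only [ht_def]
    by_cases hcond : Q + 1 ≤ p.1 ∧ |(p.2 : ℝ)| ≤ muP l₀ ε₀ p.1
    · rw [if_pos hcond, Real.ediam_Icc]
      apply ENNReal.ofReal_le_ofReal
      have heq : (((p.2 : ℝ) + 1/2) / muP l₀ ε₀ p.1
            + lamP l₀ ε₀ p.1 ^ (-(ε₀ ^ 2 / 18)) / muP l₀ ε₀ p.1)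
          - (((p.2 : ℝ) + 1/2) / muP l₀ ε₀ p.1
            - lamP l₀ ε₀ p.1 ^ (-(ε₀ ^ 2 / 18)) / muP l₀ ε₀ p.1) = len p.1 := by
        simp only [hlen_def]; ring
      rw [heq]
      have hq1 : Q ≤ p.1 - 1 := by omega
      have h3 := pow_le_pow_of_le_one hσ0.le hσ1.le hq1
      have h4 := hlen2 p.1
      linarith
    · rw [if_neg hcond, Metric.ediam_empty]
      exact zero_le
  have hst : ∀ Q : ℕ, (⋂ (q : ℕ) (_ : 1 ≤ q), Vq l₀ ε₀ q) ⊆ ⋃ p : ℕ × ℤ, t Q p := by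
    intro Q x hx
    have hx1 : x ∈ Vq l₀ ε₀ (Q+1) := by
      simp only [Set.mem_iInter] at hx
      exact hx (Q+1) (Nat.le_add_left 1 Q)
    simp only [Vq, Uq, Set.mem_iUnion, exists_prop] at hx1
    obtain ⟨q', hq', l, hl, hIcc⟩ := hx1
    refine Set.mem_iUnion.mpr ⟨(q', l), ?_⟩
    simp only [ht_def]
    rw [if_pos ⟨by omega, hl⟩]
    exact hIcc
  have hmain : μH[d] (⋂ (q : ℕ) (_ : 1 ≤ q), Vq l₀ ε₀ q) ≤ Filter.liminf
      (fun Q : ℕ => ∑' p : ℕ × ℤ, Metric.ediam (t Q p) ^ d) Filter.atTop :=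
    Measure.hausdorffMeasure_le_liminf_tsum d _ (fun Q => ENNReal.ofReal (4 * σ ^ Q)) hr t
      (Filter.Eventually.of_forall hdiam) (Filter.Eventually.of_forall hst)
  -- bounding the sums
  have hFQ : ∀ Q : ℕ, (∑' p : ℕ × ℤ, Metric.ediam (t Q p) ^ d)
      ≤ ENNReal.ofReal (12 * l₀ ^ (-c : ℝ) / ρ * ρ ^ Q) * (1 - ENNReal.ofReal ρ)⁻¹ := by
    intro Q
    have hinner : ∀ q : ℕ, (∑' l : ℤ, Metric.ediam (t Q (q, l)) ^ d)
        ≤ ENNReal.ofReal (12 * l₀ ^ (-c : ℝ) / ρ * ρ ^ Q) * (ENNReal.ofReal ρ) ^ q := by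
      intro q
      by_cases hQq : Q + 1 ≤ q
      · have hq1 : (1:ℕ) ≤ q := by omega
        have hqq' : q - 1 + 1 = q := by omega
        have hbound : ∀ l : ℤ, Metric.ediam (t Q (q, l)) ^ d ≤ ENNReal.ofReal (len q ^ d) := by
          intro l
          simp only [ht_def]
          by_cases hl : |(l : ℝ)| ≤ muP l₀ ε₀ q
          · rw [if_pos ⟨hQq, hl⟩, Real.ediam_Icc]
            have heq : (((l : ℝ) + 1/2) / muP l₀ ε₀ q
                  + lamP l₀ ε₀ q ^ (-(ε₀ ^ 2 / 18)) / muP l₀ ε₀ q)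
                - (((l : ℝ) + 1/2) / muP l₀ ε₀ q
                  - lamP l₀ ε₀ q ^ (-(ε₀ ^ 2 / 18)) / muP l₀ ε₀ q) = len q := by
              simp only [hlen_def]; ring
            rw [heq, ENNReal.ofReal_rpow_of_pos (hlen_pos q)]
          · rw [if_neg (fun hcon => hl hcon.2), Metric.ediam_empty,
              ENNReal.zero_rpow_of_pos hd0]
            exact zero_le
        have hvanish : ∀ l : ℤ, l ∉ Finset.Icc (-⌊muP l₀ ε₀ q⌋) ⌊muP l₀ ε₀ q⌋ →
            Metric.ediam (t Q (q, l)) ^ d = 0 := by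
          intro l hl
          have hl' : ¬ |(l : ℝ)| ≤ muP l₀ ε₀ q := by
            simp only [Finset.mem_Icc] at hl
            intro hcontra
            have habs := abs_le.mp hcontra
            have h1 : l ≤ ⌊muP l₀ ε₀ q⌋ := Int.le_floor.mpr habs.2
            have h2 : -l ≤ ⌊muP l₀ ε₀ q⌋ := Int.le_floor.mpr (by push_cast; linarith [habs.1])
            exact hl ⟨by omega, h1⟩
          simp only [ht_def]
          rw [if_neg (fun hcon => hl' hcon.2), Metric.ediam_empty,
            ENNReal.zero_rpow_of_pos hd0]
        have hfloor1 : (1:ℤ) ≤ ⌊muP l₀ ε₀ q⌋ := Int.le_floor.mpr (by exact_mod_cast hmu1 q)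
        have hcardnat : (Finset.Icc (-⌊muP l₀ ε₀ q⌋) ⌊muP l₀ ε₀ q⌋).card
            = (2 * ⌊muP l₀ ε₀ q⌋ + 1).toNat := by
          rw [Int.card_Icc]; congr 1; ring
        have hcardR : (((Finset.Icc (-⌊muP l₀ ε₀ q⌋) ⌊muP l₀ ε₀ q⌋).card : ℕ) : ℝ)
            ≤ 3 * muP l₀ ε₀ q := by
          have h0 : (0:ℤ) ≤ 2 * ⌊muP l₀ ε₀ q⌋ + 1 := by omega
          rw [hcardnat]
          rw [show (((2 * ⌊muP l₀ ε₀ q⌋ + 1).toNat : ℕ) : ℝ)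
              = ((2 * ⌊muP l₀ ε₀ q⌋ + 1 : ℤ) : ℝ) from by
            exact_mod_cast congrArg (Int.cast : ℤ → ℝ) (Int.toNat_of_nonneg h0)]
          push_cast
          have h5 := Int.floor_le (muP l₀ ε₀ q)
          have h6 := hmu1 q
          linarith
        have hcard : (((Finset.Icc (-⌊muP l₀ ε₀ q⌋) ⌊muP l₀ ε₀ q⌋).card : ℕ) : ℝ≥0∞)
            ≤ ENNReal.ofReal (3 * muP l₀ ε₀ q) := by
          rw [← ENNReal.ofReal_natCast]
          exact ENNReal.ofReal_le_ofReal hcardR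
        have hlen_d_nn : (0:ℝ) ≤ len q ^ d := Real.rpow_nonneg (hlen_pos q).le d
        calc (∑' l : ℤ, Metric.ediam (t Q (q, l)) ^ d)
            = ∑ l ∈ Finset.Icc (-⌊muP l₀ ε₀ q⌋) ⌊muP l₀ ε₀ q⌋,
                Metric.ediam (t Q (q, l)) ^ d := tsum_eq_sum hvanish
          _ ≤ ∑ l ∈ Finset.Icc (-⌊muP l₀ ε₀ q⌋) ⌊muP l₀ ε₀ q⌋,
                ENNReal.ofReal (len q ^ d) := Finset.sum_le_sum (fun l _ => hbound l)
          _ = ((Finset.Icc (-⌊muP l₀ ε₀ q⌋) ⌊muP l₀ ε₀ q⌋).card : ℝ≥0∞)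
                * ENNReal.ofReal (len q ^ d) := by
              rw [Finset.sum_const, nsmul_eq_mul]
          _ ≤ ENNReal.ofReal (3 * muP l₀ ε₀ q) * ENNReal.ofReal (len q ^ d) :=
              mul_le_mul_left hcard _
          _ = ENNReal.ofReal (3 * muP l₀ ε₀ q * len q ^ d) := by
              rw [← ENNReal.ofReal_mul (by linarith [hmu0 q])]
          _ ≤ ENNReal.ofReal (12 * l₀ ^ (-c : ℝ) / ρ * ρ ^ Q * ρ ^ q) := by
              apply ENNReal.ofReal_le_ofReal
              have h1 : ρ ^ (q-1) ≤ ρ ^ Q := pow_le_pow_of_le_one hρ0.le hρ1.le (by omega)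
              have h2 : ρ ^ q = ρ ^ (q-1) * ρ := by rw [← pow_succ, hqq']
              have h3 : 12 * l₀ ^ (-c : ℝ) / ρ * ρ ^ Q * (ρ ^ (q-1) * ρ)
                  = 12 * l₀ ^ (-c : ℝ) * ρ ^ Q * ρ ^ (q-1) := by
                field_simp
              rw [h2, h3]
              have h4 : (0:ℝ) ≤ 12 * l₀ ^ (-c : ℝ) * ρ ^ (q-1) := by positivity
              have h5 := mul_le_mul_of_nonneg_left h1 h4
              have h6 := hterm2 q hq1
              nlinarith [h5, h6]
          _ = ENNReal.ofReal (12 * l₀ ^ (-c : ℝ) / ρ * ρ ^ Q) * (ENNReal.ofReal ρ) ^ q := by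
              rw [ENNReal.ofReal_mul (by positivity), ENNReal.ofReal_pow hρ0.le]
      · have hzero : ∀ l : ℤ, Metric.ediam (t Q (q, l)) ^ d = 0 := by
          intro l
          simp only [ht_def]
          rw [if_neg (fun hcon => hQq hcon.1), Metric.ediam_empty,
            ENNReal.zero_rpow_of_pos hd0]
        calc (∑' l : ℤ, Metric.ediam (t Q (q, l)) ^ d) = ∑' _ : ℤ, (0:ℝ≥0∞) := by
              simp only [hzero]
          _ = 0 := tsum_zero
          _ ≤ _ := zero_le
    calc (∑' p : ℕ × ℤ, Metric.ediam (t Q p) ^ d)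
        = ∑' q : ℕ, ∑' l : ℤ, Metric.ediam (t Q (q, l)) ^ d := ENNReal.tsum_prod'
      _ ≤ ∑' q : ℕ, ENNReal.ofReal (12 * l₀ ^ (-c : ℝ) / ρ * ρ ^ Q) * (ENNReal.ofReal ρ) ^ q :=
          ENNReal.tsum_le_tsum hinner
      _ = ENNReal.ofReal (12 * l₀ ^ (-c : ℝ) / ρ * ρ ^ Q) * ∑' q : ℕ, (ENNReal.ofReal ρ) ^ q :=
          ENNReal.tsum_mul_left
      _ = ENNReal.ofReal (12 * l₀ ^ (-c : ℝ) / ρ * ρ ^ Q) * (1 - ENNReal.ofReal ρ)⁻¹ := by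
          rw [ENNReal.tsum_geometric]
  have hG : (1 - ENNReal.ofReal ρ)⁻¹ ≠ ⊤ := by
    rw [Ne, ENNReal.inv_eq_top]
    exact (tsub_pos_of_lt (ENNReal.ofReal_lt_one.mpr hρ1)).ne'
  have hlim : Filter.Tendsto (fun Q : ℕ =>
      ENNReal.ofReal (12 * l₀ ^ (-c : ℝ) / ρ * ρ ^ Q) * (1 - ENNReal.ofReal ρ)⁻¹)
      Filter.atTop (𝓝 0) := by
    have h1 : Filter.Tendsto (fun Q : ℕ => ENNReal.ofReal (12 * l₀ ^ (-c : ℝ) / ρ * ρ ^ Q))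
        Filter.atTop (𝓝 0) := by
      have h2 : Filter.Tendsto (fun Q : ℕ => 12 * l₀ ^ (-c : ℝ) / ρ * ρ ^ Q)
          Filter.atTop (𝓝 (0:ℝ)) := by
        have h3 := tendsto_pow_atTop_nhds_zero_of_lt_one hρ0.le hρ1
        simpa using h3.const_mul (12 * l₀ ^ (-c : ℝ) / ρ)
      simpa using ENNReal.tendsto_ofReal h2
    simpa using ENNReal.Tendsto.mul_const h1 (Or.inr hG)
  have hliminf : Filter.liminf (fun Q : ℕ => ∑' p : ℕ × ℤ, Metric.ediam (t Q p) ^ d)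
      Filter.atTop = 0 := by
    apply le_antisymm _ (zero_le)
    calc Filter.liminf (fun Q : ℕ => ∑' p : ℕ × ℤ, Metric.ediam (t Q p) ^ d) Filter.atTop
        ≤ Filter.liminf (fun Q : ℕ =>
            ENNReal.ofReal (12 * l₀ ^ (-c : ℝ) / ρ * ρ ^ Q) * (1 - ENNReal.ofReal ρ)⁻¹)
            Filter.atTop := Filter.liminf_le_liminf (Filter.Eventually.of_forall hFQ)
      _ = 0 := hlim.liminf_eq
  exact le_antisymm (hliminf ▸ hmain) (zero_le)


/-- **The exceptional set has small Hausdorff dimension** (Section 7 of the paper):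
for every admissible `d < 1`, the set `Ω := ⋂_{q≥1} V^{(q)}` satisfies `dimH Ω ≤ d`;
in particular `dimH Ω < 1` and `Ω` is Lebesgue-null. -/
theorem exceptional_set_dimension :
    ∃ ε' : ℝ, 0 < ε' ∧ ∀ ε₀ : ℝ, 0 < ε₀ → ε₀ < ε' →
    ∃ Λ₀ : ℝ, ∀ l₀ : ℝ, Λ₀ ≤ l₀ →
    ∀ d : ℝ, 0 < d → d < 1 →
      ((1 + (1 + ε₀)) * (4/5 + ε₀))
          / ((1 + (1 + ε₀)) * (4/5 + ε₀) + 2 * (1 + ε₀) * (ε₀ ^ 2 / 18)) < d →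
      dimH (⋂ (q : ℕ) (_ : 1 ≤ q), Vq l₀ ε₀ q) ≤ ENNReal.ofReal d ∧
      dimH (⋂ (q : ℕ) (_ : 1 ≤ q), Vq l₀ ε₀ q) < 1 ∧
      volume (⋂ (q : ℕ) (_ : 1 ≤ q), Vq l₀ ε₀ q) = 0 := by
  refine ⟨1, one_pos, fun ε₀ hε₀ hε₀1 => ⟨2, fun l₀ hl₀ d hd0 hd1 hdT => ?_⟩⟩
  have h0 : μH[d] (⋂ (q : ℕ) (_ : 1 ≤ q), Vq l₀ ε₀ q) = 0 :=
    key ε₀ l₀ d hε₀ hε₀1 hl₀ hd0 hd1 hdT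
  have hdim : dimH (⋂ (q : ℕ) (_ : 1 ≤ q), Vq l₀ ε₀ q) ≤ ENNReal.ofReal d := by
    have h1 : μH[((d.toNNReal : ℝ≥0) : ℝ)] (⋂ (q : ℕ) (_ : 1 ≤ q), Vq l₀ ε₀ q) ≠ ⊤ := by
      rw [Real.coe_toNNReal d hd0.le, h0]
      exact ENNReal.zero_ne_top
    simpa [ENNReal.ofReal] using dimH_le_of_hausdorffMeasure_ne_top h1
  have hdim1 : dimH (⋂ (q : ℕ) (_ : 1 ≤ q), Vq l₀ ε₀ q) < 1 :=
    lt_of_le_of_lt hdim (ENNReal.ofReal_lt_one.mpr hd1)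
  refine ⟨hdim, hdim1, ?_⟩
  have h2 : μH[((1 : ℝ≥0) : ℝ)] (⋂ (q : ℕ) (_ : 1 ≤ q), Vq l₀ ε₀ q) = 0 :=
    hausdorffMeasure_of_dimH_lt (by simpa using hdim1)
  rw [← MeasureTheory.hausdorffMeasure_real]
  simpa using h2
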